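/- (Characterization of when BTR is optimal.) In a market with m_S sellers and m_B buyers, BTR achieves the optimal gains from trade if and only if the (m_S+1)-st highest value among all m_S + m_B agent values is attained by a buyer (with ties broken in favor of buyers). Moreover, when BTR is not optimal, the efficient trade size q is positive and BTR's gains from trade fall short of optimal by exactly b^(q) - x^(m_S+1), where b^(q) is the q-th highest buyer value and x^(m_S+1) is the (m_S+1)-st highest overall value. -/

import Mathlib

/-- Optimal gains from trade: `Σ_j (b^(j) - s^(j))₊` over `j = 1,...,min(|s|,|b|)` with `b^(j)`
the `j`-th highest buyer value and `s^(j)` the `j`-th lowest seller value. -/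
noncomputable def optGFT (s b : Multiset ℝ) : ℝ :=
  ∑ j ∈ Finset.range (min (Multiset.card s) (Multiset.card b)),
    max ((b.sort (· ≤ ·)).getD (Multiset.card b - 1 - j) 0
          - (s.sort (· ≤ ·)).getD j 0) 0

/-- The efficient trade size: the number of pairs `(b^(j), s^(j))` with `b^(j) ≥ s^(j)` (ties
broken in favor of buyers). -/
noncomputable def tradeSize (s b : Multiset ℝ) : ℕ :=
  ((Finset.range (min (Multiset.card s) (Multiset.card b))).filter
    (fun j => (s.sort (· ≤ ·)).getD j 0
      ≤ (b.sort (· ≤ ·)).getD (Multiset.card b - 1 - j) 0)).card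

/-- The gains from trade of the Buyer Trade Reduction mechanism: all `q` efficient pairs trade
if `b^(q+1)` exists and `b^(q+1) ≥ s^(q)`; otherwise the last pair is reduced. -/
noncomputable def btrGFT (s b : Multiset ℝ) : ℝ :=
  if tradeSize s b < Multiset.card b ∧
      (s.sort (· ≤ ·)).getD (tradeSize s b - 1) 0
        ≤ (b.sort (· ≤ ·)).getD (Multiset.card b - 1 - tradeSize s b) 0 then
    ∑ j ∈ Finset.range (tradeSize s b),
      ((b.sort (· ≤ ·)).getD (Multiset.card b - 1 - j) 0 - (s.sort (· ≤ ·)).getD j 0)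
  else
    ∑ j ∈ Finset.range (tradeSize s b - 1),
      ((b.sort (· ≤ ·)).getD (Multiset.card b - 1 - j) 0 - (s.sort (· ≤ ·)).getD j 0)


namespace BTRAux

lemma getD_mono {l : List ℝ} (hl : l.Pairwise (· ≤ ·)) {i j : ℕ} (hij : i ≤ j)
    (hj : j < l.length) : l.getD i 0 ≤ l.getD j 0 := by
  rw [List.getD_eq_getElem l 0 (lt_of_le_of_lt hij hj), List.getD_eq_getElem l 0 hj]
  have := hl.rel_get_of_le (a := ⟨i, lt_of_le_of_lt hij hj⟩) (b := ⟨j, hj⟩) hij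
  simpa using this

lemma cnt_le {l : List ℝ} (hl : l.Pairwise (· ≤ ·)) {i : ℕ} (hi : i < l.length) {v : ℝ}
    (hv : l.getD i 0 ≤ v) : i + 1 ≤ (l.filter (fun x => decide (x ≤ v))).length := by
  have hsub := (List.take_sublist (i+1) l).filter (fun x => decide (x ≤ v))
  have heq : (l.take (i+1)).filter (fun x => decide (x ≤ v)) = l.take (i+1) := by
    rw [List.filter_eq_self]
    intro x hx
    obtain ⟨j, hj, rfl⟩ := List.mem_iff_getElem.1 hx
    have hj' : j < l.length := by
      have := hj; rw [List.length_take] at this; omega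
    rw [List.getElem_take]
    have hji : j ≤ i := by
      have := hj; rw [List.length_take] at this; omega
    have : l.getD j 0 ≤ v := le_trans (getD_mono hl hji hi) hv
    rw [List.getD_eq_getElem l 0 hj'] at this
    exact decide_eq_true this
  have hlen : (l.take (i+1)).length = i + 1 := by rw [List.length_take]; omega
  calc i + 1 = (l.take (i+1)).length := hlen.symm
    _ = ((l.take (i+1)).filter (fun x => decide (x ≤ v))).length := by rw [heq]
    _ ≤ _ := hsub.length_le

lemma cnt_ge {l : List ℝ} (hl : l.Pairwise (· ≤ ·)) {i : ℕ} (hi : i < l.length) {v : ℝ}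
    (hv : v ≤ l.getD i 0) : l.length - i ≤ (l.filter (fun x => decide (v ≤ x))).length := by
  have hsub := (List.drop_sublist i l).filter (fun x => decide (v ≤ x))
  have heq : (l.drop i).filter (fun x => decide (v ≤ x)) = l.drop i := by
    rw [List.filter_eq_self]
    intro x hx
    obtain ⟨j, hj, rfl⟩ := List.mem_iff_getElem.1 hx
    rw [List.getElem_drop]
    have hij : i + j < l.length := by
      have := hj; rw [List.length_drop] at this; omega
    have : v ≤ l.getD (i+j) 0 := le_trans hv (getD_mono hl (Nat.le_add_right i j) hij)
    rw [List.getD_eq_getElem l 0 hij] at this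
    exact decide_eq_true this
  calc l.length - i = (l.drop i).length := List.length_drop.symm
    _ = ((l.drop i).filter (fun x => decide (v ≤ x))).length := by rw [heq]
    _ ≤ _ := hsub.length_le

lemma sorted_getD_eq {l : List ℝ} (hl : l.Pairwise (· ≤ ·)) {k : ℕ} (hk : k < l.length) {v : ℝ}
    (h1 : k + 1 ≤ (l.filter (fun x => decide (x ≤ v))).length)
    (h2 : l.length - k ≤ (l.filter (fun x => decide (v ≤ x))).length) :
    l.getD k 0 = v := by
  rw [List.getD_eq_getElem l 0 hk]
  rcases lt_trichotomy (l[k]) v with h | h | h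
  · exfalso
    set p : ℝ → Bool := fun x => decide (v ≤ x) with hp
    have hsplit : l.filter p = (l.take (k+1)).filter p ++ (l.drop (k+1)).filter p := by
      conv_lhs => rw [← List.take_append_drop (k+1) l]
      exact List.filter_append _ _
    have hnil : (l.take (k+1)).filter p = [] := by
      rw [List.filter_eq_nil_iff]
      intro x hx
      obtain ⟨j, hj, rfl⟩ := List.mem_iff_getElem.1 hx
      have hj' : j < l.length := by
        have := hj; rw [List.length_take] at this; omega
      have hji : j ≤ k := by
        have := hj; rw [List.length_take] at this; omega
      rw [List.getElem_take]
      have hle : l.getD j 0 ≤ l.getD k 0 := getD_mono hl hji hk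
      rw [List.getD_eq_getElem l 0 hj', List.getD_eq_getElem l 0 hk] at hle
      simp only [hp, decide_eq_true_eq]
      intro hvx
      exact absurd (lt_of_lt_of_le (lt_of_le_of_lt hle h) hvx) (lt_irrefl _)
    have hlen : (l.filter p).length ≤ l.length - (k+1) := by
      rw [hsplit, List.length_append, hnil]
      simp only [List.length_nil, Nat.zero_add]
      calc ((l.drop (k+1)).filter p).length ≤ (l.drop (k+1)).length :=
            List.filter_sublist.length_le
        _ = l.length - (k+1) := List.length_drop
    omega
  · exact h
  · exfalso
    set p : ℝ → Bool := fun x => decide (x ≤ v) with hp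
    have hsplit : l.filter p = (l.take k).filter p ++ (l.drop k).filter p := by
      conv_lhs => rw [← List.take_append_drop k l]
      exact List.filter_append _ _
    have hnil : (l.drop k).filter p = [] := by
      rw [List.filter_eq_nil_iff]
      intro x hx
      obtain ⟨j, hj, rfl⟩ := List.mem_iff_getElem.1 hx
      rw [List.getElem_drop]
      have hkj : k + j < l.length := by
        have := hj; rw [List.length_drop] at this; omega
      have hle : l.getD k 0 ≤ l.getD (k+j) 0 := getD_mono hl (Nat.le_add_right _ _) hkj
      rw [List.getD_eq_getElem l 0 hk, List.getD_eq_getElem l 0 hkj] at hle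
      simp only [hp, decide_eq_true_eq]
      intro hvx
      exact absurd (lt_of_lt_of_le (lt_of_lt_of_le h hle) hvx) (lt_irrefl _)
    have hlen : (l.filter p).length ≤ k := by
      rw [hsplit, List.length_append, hnil]
      simp only [List.length_nil, Nat.add_zero]
      calc ((l.take k).filter p).length ≤ (l.take k).length :=
            List.filter_sublist.length_le
        _ ≤ k := by rw [List.length_take]; omega
    omega

lemma filter_range_mem_iff {n : ℕ} (p : ℕ → Prop) [DecidablePred p]
    (hdc : ∀ j, j < n → p j → ∀ k, k < j → p k) (j : ℕ) :
    j ∈ (Finset.range n).filter p ↔ j < ((Finset.range n).filter p).card := by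
  constructor
  · intro hj
    have hsub : Finset.range (j+1) ⊆ (Finset.range n).filter p := by
      intro k hk
      rw [Finset.mem_range] at hk
      rw [Finset.mem_filter, Finset.mem_range] at hj ⊢
      rcases eq_or_lt_of_le (Nat.lt_succ_iff.1 hk) with rfl | h
      · exact hj
      · exact ⟨by omega, hdc j hj.1 hj.2 k h⟩
    have := Finset.card_le_card hsub
    rw [Finset.card_range] at this
    omega
  · intro hj
    by_contra hjT
    have hsub : (Finset.range n).filter p ⊆ Finset.range j := by
      intro k hk
      rw [Finset.mem_range]
      by_contra hk2
      push_neg at hk2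
      rcases eq_or_lt_of_le hk2 with rfl | h
      · exact hjT hk
      · apply hjT
        rw [Finset.mem_filter, Finset.mem_range] at hk ⊢
        exact ⟨by omega, hdc k hk.1 hk.2 j h⟩
    have := Finset.card_le_card hsub
    rw [Finset.card_range] at this
    omega

end BTRAux

/-- Characterization of when BTR is optimal (Lemma `reduce`): in a market with `m_S` sellers
and `m_B ≥ 1` buyers, BTR achieves the optimal GFT iff the `(m_S+1)`-st highest value
`x^(m_S+1)` among all agents is attained by a buyer (as a value, i.e. some buyer's value equals
it); moreover, when BTR is not optimal, the efficient trade size `q` is positive and BTR falls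
short of the optimum by exactly `b^(q) - x^(m_S+1)`.  Here the `(m_S+1)`-st highest value of
the combined multiset `s + b` (of size `m_S + m_B`) sits at ascending position `m_B - 1`. -/
theorem btr_optimal_iff_buyer_at_mS_plus_one (s b : Multiset ℝ) (hb : 0 < Multiset.card b) :
    (btrGFT s b = optGFT s b
      ↔ ((s + b).sort (· ≤ ·)).getD (Multiset.card b - 1) 0 ∈ b)
    ∧ (btrGFT s b ≠ optGFT s b →
        0 < tradeSize s b ∧
        optGFT s b = btrGFT s b
          + ((b.sort (· ≤ ·)).getD (Multiset.card b - tradeSize s b) 0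
              - ((s + b).sort (· ≤ ·)).getD (Multiset.card b - 1) 0)) := by
  have hslS : (s.sort (· ≤ ·)).Pairwise (· ≤ ·) := Multiset.pairwise_sort _ _
  have hblS : (b.sort (· ≤ ·)).Pairwise (· ≤ ·) := Multiset.pairwise_sort _ _
  have hclS : ((s + b).sort (· ≤ ·)).Pairwise (· ≤ ·) := Multiset.pairwise_sort _ _
  have hslL : (s.sort (· ≤ ·)).length = Multiset.card s := Multiset.length_sort _
  have hblL : (b.sort (· ≤ ·)).length = Multiset.card b := Multiset.length_sort _
  have hclL : ((s + b).sort (· ≤ ·)).length = Multiset.card s + Multiset.card b := by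
    rw [Multiset.length_sort, Multiset.card_add]
  -- downward closure of the trading predicate
  have hdc : ∀ j, j < min (Multiset.card s) (Multiset.card b) →
      ((s.sort (· ≤ ·)).getD j 0 ≤ (b.sort (· ≤ ·)).getD (Multiset.card b - 1 - j) 0) →
      ∀ k, k < j →
      ((s.sort (· ≤ ·)).getD k 0 ≤ (b.sort (· ≤ ·)).getD (Multiset.card b - 1 - k) 0) := by
    intro j hj hPj k hkj
    have hjS : j < (s.sort (· ≤ ·)).length := by rw [hslL]; omega
    have hkB : Multiset.card b - 1 - k < (b.sort (· ≤ ·)).length := by rw [hblL]; omega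
    exact le_trans (BTRAux.getD_mono hslS (le_of_lt hkj) hjS)
      (le_trans hPj (BTRAux.getD_mono hblS (by omega) hkB))
  have hmem : ∀ j, j < tradeSize s b ↔
      (j < min (Multiset.card s) (Multiset.card b) ∧
        (s.sort (· ≤ ·)).getD j 0 ≤ (b.sort (· ≤ ·)).getD (Multiset.card b - 1 - j) 0) := by
    intro j
    have h := BTRAux.filter_range_mem_iff
      (n := min (Multiset.card s) (Multiset.card b))
      (fun j => (s.sort (· ≤ ·)).getD j 0
        ≤ (b.sort (· ≤ ·)).getD (Multiset.card b - 1 - j) 0) hdc j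
    rw [Finset.mem_filter, Finset.mem_range] at h
    unfold tradeSize
    exact h.symm
  have hqmin : tradeSize s b ≤ min (Multiset.card s) (Multiset.card b) := by
    have h := Finset.card_filter_le
      (Finset.range (min (Multiset.card s) (Multiset.card b)))
      (fun j => (s.sort (· ≤ ·)).getD j 0
        ≤ (b.sort (· ≤ ·)).getD (Multiset.card b - 1 - j) 0)
    rw [Finset.card_range] at h
    exact h
  have hqS : tradeSize s b ≤ Multiset.card s := by omega
  have hqB : tradeSize s b ≤ Multiset.card b := by omega
  -- optGFT as a plain sum over range (tradeSize s b)
  have hopt : optGFT s b = ∑ j ∈ Finset.range (tradeSize s b),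
      ((b.sort (· ≤ ·)).getD (Multiset.card b - 1 - j) 0 - (s.sort (· ≤ ·)).getD j 0) := by
    rw [optGFT, ← Finset.sum_subset
      (Finset.range_subset_range.2 hqmin)
      (by
        intro j hjn hjq
        rw [Finset.mem_range] at hjn hjq
        have hnP : ¬ ((s.sort (· ≤ ·)).getD j 0
            ≤ (b.sort (· ≤ ·)).getD (Multiset.card b - 1 - j) 0) :=
          fun hP => hjq ((hmem j).2 ⟨hjn, hP⟩)
        have : (b.sort (· ≤ ·)).getD (Multiset.card b - 1 - j) 0
            - (s.sort (· ≤ ·)).getD j 0 < 0 := by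
          push_neg at hnP; linarith
        exact max_eq_right (le_of_lt this))]
    refine Finset.sum_congr rfl (fun j hj => ?_)
    rw [Finset.mem_range] at hj
    have hP := ((hmem j).1 hj).2
    exact max_eq_left (by linarith)
  -- permutation of the combined sorted list
  have hperm : ((s + b).sort (· ≤ ·)).Perm (s.sort (· ≤ ·) ++ b.sort (· ≤ ·)) := by
    rw [← Multiset.coe_eq_coe]
    simp [Multiset.sort_eq, ← Multiset.coe_add]
  -- master counting lemma specialisation
  have key : ∀ v : ℝ,
      Multiset.card b ≤ ((s.sort (· ≤ ·)).filter (fun x => decide (x ≤ v))).length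
          + ((b.sort (· ≤ ·)).filter (fun x => decide (x ≤ v))).length →
      Multiset.card s + 1 ≤ ((s.sort (· ≤ ·)).filter (fun x => decide (v ≤ x))).length
          + ((b.sort (· ≤ ·)).filter (fun x => decide (v ≤ x))).length →
      ((s + b).sort (· ≤ ·)).getD (Multiset.card b - 1) 0 = v := by
    intro v h1 h2
    have e1 : (((s + b).sort (· ≤ ·)).filter (fun x => decide (x ≤ v))).length
        = ((s.sort (· ≤ ·)).filter (fun x => decide (x ≤ v))).length
          + ((b.sort (· ≤ ·)).filter (fun x => decide (x ≤ v))).length := by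
      rw [(hperm.filter _).length_eq, List.filter_append, List.length_append]
    have e2 : (((s + b).sort (· ≤ ·)).filter (fun x => decide (v ≤ x))).length
        = ((s.sort (· ≤ ·)).filter (fun x => decide (v ≤ x))).length
          + ((b.sort (· ≤ ·)).filter (fun x => decide (v ≤ x))).length := by
      rw [(hperm.filter _).length_eq, List.filter_append, List.length_append]
    exact BTRAux.sorted_getD_eq hclS (by rw [hclL]; omega)
      (by rw [e1]; omega) (by rw [hclL, e2]; omega)
  by_cases hC : tradeSize s b < Multiset.card b ∧
      (s.sort (· ≤ ·)).getD (tradeSize s b - 1) 0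
        ≤ (b.sort (· ≤ ·)).getD (Multiset.card b - 1 - tradeSize s b) 0
  · -- BTR is optimal, and x^(mS+1) = b^(q+1)
    have hbo : btrGFT s b = optGFT s b := by rw [btrGFT, if_pos hC, hopt]
    have hX : ((s + b).sort (· ≤ ·)).getD (Multiset.card b - 1) 0
        = (b.sort (· ≤ ·)).getD (Multiset.card b - 1 - tradeSize s b) 0 := by
      apply key
      · have c1 := BTRAux.cnt_le hblS
          (i := Multiset.card b - 1 - tradeSize s b) (by rw [hblL]; omega)
          (le_refl ((b.sort (· ≤ ·)).getD (Multiset.card b - 1 - tradeSize s b) 0))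
        rcases Nat.eq_zero_or_pos (tradeSize s b) with hq0 | hq1
        · omega
        · have c2 := BTRAux.cnt_le hslS (i := tradeSize s b - 1) (by rw [hslL]; omega) hC.2
          omega
      · have c3 := BTRAux.cnt_ge hblS
          (i := Multiset.card b - 1 - tradeSize s b) (by rw [hblL]; omega)
          (le_refl ((b.sort (· ≤ ·)).getD (Multiset.card b - 1 - tradeSize s b) 0))
        rw [hblL] at c3
        rcases Nat.lt_or_ge (tradeSize s b) (Multiset.card s) with hlt | hge
        · have hnP : ¬ ((s.sort (· ≤ ·)).getD (tradeSize s b) 0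
              ≤ (b.sort (· ≤ ·)).getD (Multiset.card b - 1 - tradeSize s b) 0) :=
            fun hP => absurd ((hmem (tradeSize s b)).2 ⟨by omega, hP⟩) (lt_irrefl _)
          push_neg at hnP
          have c4 := BTRAux.cnt_ge hslS (i := tradeSize s b) (by rw [hslL]; omega)
            (le_of_lt hnP)
          rw [hslL] at c4
          omega
        · omega
    have hXb : ((s + b).sort (· ≤ ·)).getD (Multiset.card b - 1) 0 ∈ b := by
      rw [hX, List.getD_eq_getElem (b.sort (· ≤ ·)) 0 (by rw [hblL]; omega)]
      exact (Multiset.mem_sort _).1 (List.getElem_mem _)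
    exact ⟨⟨fun _ => hXb, fun _ => hbo⟩, fun hne => absurd hbo hne⟩
  · have hbtr : btrGFT s b = ∑ j ∈ Finset.range (tradeSize s b - 1),
        ((b.sort (· ≤ ·)).getD (Multiset.card b - 1 - j) 0
          - (s.sort (· ≤ ·)).getD j 0) := by rw [btrGFT, if_neg hC]
    rw [not_and] at hC
    rcases Nat.eq_zero_or_pos (tradeSize s b) with hq0 | hq1
    · -- trade size 0 : BTR trivially optimal, top value is the best buyer
      have hbo : btrGFT s b = optGFT s b := by rw [hbtr, hopt, hq0]
      have hX : ((s + b).sort (· ≤ ·)).getD (Multiset.card b - 1) 0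
          = (b.sort (· ≤ ·)).getD (Multiset.card b - 1) 0 := by
        apply key
        · have c1 := BTRAux.cnt_le hblS (i := Multiset.card b - 1) (by rw [hblL]; omega)
            (le_refl ((b.sort (· ≤ ·)).getD (Multiset.card b - 1) 0))
          omega
        · have c3 := BTRAux.cnt_ge hblS (i := Multiset.card b - 1) (by rw [hblL]; omega)
            (le_refl ((b.sort (· ≤ ·)).getD (Multiset.card b - 1) 0))
          rw [hblL] at c3
          rcases Nat.eq_zero_or_pos (Multiset.card s) with hs0 | hs1
          · omega
          · have hnP : ¬ ((s.sort (· ≤ ·)).getD 0 0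
                ≤ (b.sort (· ≤ ·)).getD (Multiset.card b - 1 - 0) 0) :=
              fun hP => absurd ((hmem 0).2 ⟨by omega, hP⟩) (by omega)
            push_neg at hnP
            rw [Nat.sub_zero] at hnP
            have c4 := BTRAux.cnt_ge hslS (i := 0) (by rw [hslL]; omega) (le_of_lt hnP)
            rw [hslL] at c4
            omega
      have hXb : ((s + b).sort (· ≤ ·)).getD (Multiset.card b - 1) 0 ∈ b := by
        rw [hX, List.getD_eq_getElem (b.sort (· ≤ ·)) 0 (by rw [hblL]; omega)]
        exact (Multiset.mem_sort _).1 (List.getElem_mem _)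
      exact ⟨⟨fun _ => hXb, fun _ => hbo⟩, fun hne => absurd hbo hne⟩
    · -- trade size ≥ 1 and the reduction case
      have hidx : Multiset.card b - 1 - (tradeSize s b - 1)
          = Multiset.card b - tradeSize s b := by omega
      have hPq1 : (s.sort (· ≤ ·)).getD (tradeSize s b - 1) 0
          ≤ (b.sort (· ≤ ·)).getD (Multiset.card b - tradeSize s b) 0 := by
        have := ((hmem (tradeSize s b - 1)).1 (by omega)).2
        rwa [hidx] at this
      have hX : ((s + b).sort (· ≤ ·)).getD (Multiset.card b - 1) 0
          = (s.sort (· ≤ ·)).getD (tradeSize s b - 1) 0 := by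
        apply key
        · have c1 := BTRAux.cnt_le hslS (i := tradeSize s b - 1) (by rw [hslL]; omega)
            (le_refl ((s.sort (· ≤ ·)).getD (tradeSize s b - 1) 0))
          rcases Nat.lt_or_ge (tradeSize s b) (Multiset.card b) with hlt | hge
          · have h5 := hC hlt
            push_neg at h5
            have c2 := BTRAux.cnt_le hblS (i := Multiset.card b - 1 - tradeSize s b)
              (by rw [hblL]; omega) (le_of_lt h5)
            omega
          · omega
        · have c3 := BTRAux.cnt_ge hslS (i := tradeSize s b - 1) (by rw [hslL]; omega)
            (le_refl ((s.sort (· ≤ ·)).getD (tradeSize s b - 1) 0))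
          rw [hslL] at c3
          have c4 := BTRAux.cnt_ge hblS (i := Multiset.card b - tradeSize s b)
            (by rw [hblL]; omega) hPq1
          rw [hblL] at c4
          omega
      have hsum : optGFT s b = btrGFT s b
          + ((b.sort (· ≤ ·)).getD (Multiset.card b - tradeSize s b) 0
              - (s.sort (· ≤ ·)).getD (tradeSize s b - 1) 0) := by
        rw [hopt, hbtr]
        have hsplit : ∑ j ∈ Finset.range (tradeSize s b),
            ((b.sort (· ≤ ·)).getD (Multiset.card b - 1 - j) 0
              - (s.sort (· ≤ ·)).getD j 0)
            = ∑ j ∈ Finset.range (tradeSize s b - 1),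
                ((b.sort (· ≤ ·)).getD (Multiset.card b - 1 - j) 0
                  - (s.sort (· ≤ ·)).getD j 0)
              + ((b.sort (· ≤ ·)).getD (Multiset.card b - 1 - (tradeSize s b - 1)) 0
                  - (s.sort (· ≤ ·)).getD (tradeSize s b - 1) 0) := by
          conv_lhs => rw [show tradeSize s b = (tradeSize s b - 1) + 1 by omega]
          exact Finset.sum_range_succ _ _
        rw [hsplit, hidx]
      constructor
      · constructor
        · intro heq
          have hDz : (s.sort (· ≤ ·)).getD (tradeSize s b - 1) 0
              = (b.sort (· ≤ ·)).getD (Multiset.card b - tradeSize s b) 0 := by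
            rw [heq] at hsum; linarith
          rw [hX, hDz,
            List.getD_eq_getElem (b.sort (· ≤ ·)) 0 (by rw [hblL]; omega)]
          exact (Multiset.mem_sort _).1 (List.getElem_mem _)
        · intro hmemX
          rw [hX] at hmemX
          have hmemX' : (s.sort (· ≤ ·)).getD (tradeSize s b - 1) 0 ∈ b.sort (· ≤ ·) :=
            (Multiset.mem_sort _).2 hmemX
          obtain ⟨i, hi, hie⟩ := List.mem_iff_getElem.1 hmemX'
          have hi' : i < Multiset.card b := by rw [← hblL]; exact hi
          rcases Nat.lt_or_ge i (Multiset.card b - tradeSize s b) with hlt | hge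
          · exfalso
            have hqmB : tradeSize s b < Multiset.card b := by omega
            have h5 := hC hqmB
            push_neg at h5
            have h6 : (b.sort (· ≤ ·)).getD i 0
                ≤ (b.sort (· ≤ ·)).getD (Multiset.card b - 1 - tradeSize s b) 0 :=
              BTRAux.getD_mono hblS (by omega) (by rw [hblL]; omega)
            rw [List.getD_eq_getElem (b.sort (· ≤ ·)) 0 hi, hie] at h6
            linarith
          · have h6 : (b.sort (· ≤ ·)).getD (Multiset.card b - tradeSize s b) 0
                ≤ (b.sort (· ≤ ·)).getD i 0 :=
              BTRAux.getD_mono hblS hge hi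
            rw [List.getD_eq_getElem (b.sort (· ≤ ·)) 0 hi, hie] at h6
            have hDz : (b.sort (· ≤ ·)).getD (Multiset.card b - tradeSize s b) 0
                = (s.sort (· ≤ ·)).getD (tradeSize s b - 1) 0 := le_antisymm h6 hPq1
            rw [hsum, hDz]
            ring
      · intro _
        refine ⟨hq1, ?_⟩
        rw [hX]
        exact hsum
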